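/- Under the same setup (s = δ + γ, δ of antifield degree −1 and acyclic in positive antifield number, γ of degree 0, finite expansions): the map sending the class of an s-cocycle a = a₀ + a₁ + … to the class of its antifield-independent part a₀ induces an isomorphism H(s) ≅ H(γ, H₀(δ)), where H₀(δ) is the homology of δ at antifield number 0 and γ acts on it since δγ + γδ = 0. Explicitly: (i) sa = 0 implies γa₀ + δa₁ = 0; (ii) every a₀ with γa₀ + δa₁ = 0 for some a₁ extends to an s-cocycle a = a₀ + a₁ + …; (iii) a = sb for some b if and only if a₀ = γb₀ + δb₁ for some b₀, b₁. -/
import Mathlib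


/-- Homological perturbation: with `s = δ + γ` (`δ` of antifield degree −1, acyclic in
positive antifield number, `γ` of degree 0, `δ² = δγ + γδ = γ² = 0`), working in the
completed space of families `a = (a_k)_{k∈ℕ}`, the map `[a] ↦ [a₀]` induces an
isomorphism `H(s) ≅ H(γ, H₀(δ))`. Explicitly: (i) `s a = 0` implies
`γ a₀ + δ a₁ = 0`; (ii) every `a₀` with `γ a₀ + δ a₁ = 0` for some `a₁` extends to an
`s`-cocycle `a = a₀ + a₁ + …`; (iii) an `s`-cocycle `a` is `s`-exact iff
`a₀ = γ b₀ + δ b₁` for some `b₀, b₁`. -/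
theorem stmt_14 (K : Type*) [Field K]
    (M : ℕ → Type*) [∀ i, AddCommGroup (M i)] [∀ i, Module K (M i)]
    (δ : ∀ i, M (i + 1) →ₗ[K] M i)
    (γ : ∀ i, M i →ₗ[K] M i)
    (hδδ : ∀ i (x : M (i + 2)), δ i (δ (i + 1) x) = 0)
    (hδγ : ∀ i (x : M (i + 1)), δ i (γ (i + 1) x) + γ i (δ i x) = 0)
    (hγγ : ∀ i (x : M i), γ i (γ i x) = 0)
    (hacyc : ∀ i (x : M (i + 1)), δ i x = 0 → ∃ y : M (i + 2), x = δ (i + 1) y) :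
    (∀ a : ∀ i, M i, (∀ i, δ i (a (i + 1)) + γ i (a i) = 0) →
        γ 0 (a 0) + δ 0 (a 1) = 0) ∧
    (∀ (a₀ : M 0) (a₁ : M 1), γ 0 a₀ + δ 0 a₁ = 0 →
        ∃ a : ∀ i, M i, a 0 = a₀ ∧ a 1 = a₁ ∧
          ∀ i, δ i (a (i + 1)) + γ i (a i) = 0) ∧
    (∀ a : ∀ i, M i, (∀ i, δ i (a (i + 1)) + γ i (a i) = 0) →
        ((∃ b : ∀ i, M i, ∀ i, a i = δ i (b (i + 1)) + γ i (b i)) ↔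
         (∃ (b₀ : M 0) (b₁ : M 1), a 0 = γ 0 b₀ + δ 0 b₁))) := by
  refine ⟨?_, ?_, ?_⟩
  · intro a h
    rw [add_comm]; exact h 0
  · intro a₀ a₁ h
    -- recursive extension
    have step : ∀ i (p : M i × M (i + 1)), δ i p.2 + γ i p.1 = 0 →
        ∃ z : M (i + 2), δ (i + 1) z + γ (i + 1) p.2 = 0 := by
      intro i p hp
      have hδp : δ i p.2 = -γ i p.1 := eq_neg_of_add_eq_zero_left hp
      have h2 := hδγ i p.2
      rw [hδp, map_neg, hγγ, neg_zero, add_zero] at h2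
      obtain ⟨y, hy⟩ := hacyc i _ h2
      exact ⟨-y, by rw [map_neg, ← hy]; exact neg_add_cancel _⟩
    let F : ∀ i, {p : M i × M (i + 1) // δ i p.2 + γ i p.1 = 0} := fun i =>
      Nat.rec ⟨(a₀, a₁), by rw [add_comm]; exact h⟩
        (fun n ih => ⟨(ih.1.2, Classical.choose (step n ih.1 ih.2)),
          Classical.choose_spec (step n ih.1 ih.2)⟩) i
    exact ⟨fun i => (F i).1.1, rfl, rfl, fun i => (F i).2⟩
  · intro a ha
    constructor
    · rintro ⟨b, hb⟩
      exact ⟨b 0, b 1, by rw [add_comm]; exact hb 0⟩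
    · rintro ⟨b₀, b₁, hb⟩
      have step : ∀ i (p : M i × M (i + 1)), a i = δ i p.2 + γ i p.1 →
          ∃ z : M (i + 2), a (i + 1) = δ (i + 1) z + γ (i + 1) p.2 := by
        intro i p hp
        have h3 : δ i p.2 = a i - γ i p.1 := eq_sub_of_add_eq hp.symm
        have h4 : δ i (γ (i + 1) p.2) = -γ i (a i) := by
          have h2 := hδγ i p.2
          rw [h3, map_sub, hγγ, sub_zero] at h2
          exact eq_neg_of_add_eq_zero_left h2
        have h5 : δ i (a (i + 1)) = -γ i (a i) := eq_neg_of_add_eq_zero_left (ha i)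
        have hc : δ i (a (i + 1) - γ (i + 1) p.2) = 0 := by
          rw [map_sub, h4, h5, sub_self]
        obtain ⟨y, hy⟩ := hacyc i _ hc
        exact ⟨y, by rw [← hy]; abel⟩
      let F : ∀ i, {p : M i × M (i + 1) // a i = δ i p.2 + γ i p.1} := fun i =>
        Nat.rec ⟨(b₀, b₁), by rw [add_comm]; exact hb⟩
          (fun n ih => ⟨(ih.1.2, Classical.choose (step n ih.1 ih.2)),
            Classical.choose_spec (step n ih.1 ih.2)⟩) i
      exact ⟨fun i => (F i).1.1, fun i => (F i).2⟩
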